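/- arXiv:1111.4791 — 3 statements merged into one kernel-verified Lean document; each statement's English description precedes it below -/
import Mathlib

section
/- For any element x of a unital associative ℂ-algebra, scalars a, d ∈ ℂ, and m ∈ ℕ, one has Σ_{r+s=m} ((-1)^s / (r! s!)) · x_a^{[r]} · x_d^{<s>} = binom(a-d, m) · 1, where binom(z, m) = z(z-1)⋯(z-m+1)/m! is the generalized binomial coefficient. -/
noncomputable def rise {A : Type*} [Ring A] [Algebra ℂ A] (x : A) (a : ℂ) : ℕ → A
  | 0 => 1
  | r + 1 => rise x a r * (x + algebraMap ℂ A (a + r))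

noncomputable def fall {A : Type*} [Ring A] [Algebra ℂ A] (x : A) (a : ℂ) : ℕ → A
  | 0 => 1
  | r + 1 => fall x a r * (x + algebraMap ℂ A (a - r))

/-- The generalized binomial coefficient $\binom{z}{m} = z(z-1)\cdots(z-m+1)/m!$. -/
noncomputable def gbinom (z : ℂ) (m : ℕ) : ℂ :=
  (∏ i ∈ Finset.range m, (z - i)) / (m.factorial : ℂ)

lemma commute_x_rise {A : Type*} [Ring A] [Algebra ℂ A] (x : A) (d : ℂ) (s : ℕ) :
    Commute x (rise x d s) := by
  induction s with
  | zero => exact Commute.one_right x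
  | succ s ih =>
    exact ih.mul_right ((Commute.refl x).add_right (Algebra.commutes _ x).symm)

lemma fall_succ_mul_rise {A : Type*} [Ring A] [Algebra ℂ A] (x : A) (a d : ℂ) (r s : ℕ) :
    fall x a (r + 1) * rise x d s = fall x a r * rise x d s * (x + algebraMap ℂ A (a - r)) := by
  have h : Commute (x + algebraMap ℂ A (a - r)) (rise x d s) :=
    (commute_x_rise x d s).add_left ((Algebra.commutes _ _))
  show fall x a r * (x + algebraMap ℂ A (a - r)) * rise x d s = _
  rw [mul_assoc, h.eq, ← mul_assoc]

lemma gbinom_succ (z : ℂ) (m : ℕ) :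
    gbinom z (m + 1) = ((z - m) / (m + 1)) * gbinom z m := by
  unfold gbinom
  rw [Finset.prod_range_succ, Nat.factorial_succ]
  push_cast
  field_simp

theorem fall_rise_sum {A : Type*} [Ring A] [Algebra ℂ A] (x : A) (a d : ℂ) (m : ℕ) :
    ∑ p ∈ Finset.HasAntidiagonal.antidiagonal m,
      (((-1 : ℂ) ^ p.2 / ((p.1.factorial : ℂ) * (p.2.factorial : ℂ))) •
        (fall x a p.1 * rise x d p.2)) = gbinom (a - d) m • (1 : A) := by
  induction m with
  | zero => simp [gbinom, fall, rise]
  | succ m ih =>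
    set c : ℕ × ℕ → ℂ := fun p => (-1 : ℂ) ^ p.2 / ((p.1.factorial : ℂ) * (p.2.factorial : ℂ))
      with hc
    set T : ℕ × ℕ → A := fun p => fall x a p.1 * rise x d p.2 with hT
    have hm1 : ((m : ℂ) + 1) ≠ 0 := Nat.cast_add_one_ne_zero m
    -- key identity: (m+1) • S(m+1) = (a - d - m) • S m
    have key : ((m : ℂ) + 1) • ∑ p ∈ Finset.HasAntidiagonal.antidiagonal (m + 1), c p • T p
        = ((a - d - m)) • ∑ p ∈ Finset.HasAntidiagonal.antidiagonal m, c p • T p := by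
      rw [Finset.smul_sum]
      have split : ∀ p ∈ Finset.HasAntidiagonal.antidiagonal (m + 1),
          ((m : ℂ) + 1) • (c p • T p) =
            ((p.1 : ℂ) * c p) • T p + ((p.2 : ℂ) * c p) • T p := by
        intro p hp
        rw [← add_smul, ← add_mul, smul_smul]
        congr 2
        have h : ((p.1 : ℂ) + p.2) = (m : ℂ) + 1 := by
          exact_mod_cast congrArg (Nat.cast (R := ℂ)) (Finset.HasAntidiagonal.mem_antidiagonal.mp hp)
        rw [← h]
      rw [Finset.sum_congr rfl split, Finset.sum_add_distrib]
      have h1 : ∑ p ∈ Finset.HasAntidiagonal.antidiagonal (m + 1), ((p.1 : ℂ) * c p) • T p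
          = ∑ p ∈ Finset.HasAntidiagonal.antidiagonal m,
              (((-1 : ℂ) ^ p.2 / ((p.1.factorial : ℂ) * (p.2.factorial : ℂ)))) •
                (T p * (x + algebraMap ℂ A (a - p.1))) := by
        rw [Finset.Nat.sum_antidiagonal_succ]
        simp only [Nat.cast_zero, zero_mul, zero_smul, zero_add]
        refine Finset.sum_congr rfl fun p _ => ?_
        have hcoef : ((p.1 : ℂ) + 1) * c (p.1 + 1, p.2)
            = (-1 : ℂ) ^ p.2 / ((p.1.factorial : ℂ) * (p.2.factorial : ℂ)) := by
          simp only [hc, Nat.factorial_succ]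
          have h1 : ((p.1.factorial : ℂ)) ≠ 0 := Nat.cast_ne_zero.mpr p.1.factorial_ne_zero
          have h2 : ((p.2.factorial : ℂ)) ≠ 0 := Nat.cast_ne_zero.mpr p.2.factorial_ne_zero
          have h3 : ((p.1 : ℂ) + 1) ≠ 0 := Nat.cast_add_one_ne_zero p.1
          push_cast
          field_simp
        rw [Nat.cast_add, Nat.cast_one, hcoef]
        congr 1
        exact fall_succ_mul_rise x a d p.1 p.2
      have h2 : ∑ p ∈ Finset.HasAntidiagonal.antidiagonal (m + 1), ((p.2 : ℂ) * c p) • T p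
          = ∑ p ∈ Finset.HasAntidiagonal.antidiagonal m,
              (-((-1 : ℂ) ^ p.2 / ((p.1.factorial : ℂ) * (p.2.factorial : ℂ)))) •
                (T p * (x + algebraMap ℂ A (d + p.2))) := by
        rw [Finset.Nat.sum_antidiagonal_succ']
        simp only [Nat.cast_zero, zero_mul, zero_smul, zero_add]
        refine Finset.sum_congr rfl fun p _ => ?_
        have hcoef : ((p.2 : ℂ) + 1) * c (p.1, p.2 + 1)
            = -((-1 : ℂ) ^ p.2 / ((p.1.factorial : ℂ) * (p.2.factorial : ℂ))) := by
          simp only [hc, Nat.factorial_succ, pow_succ]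
          have h1 : ((p.1.factorial : ℂ)) ≠ 0 := Nat.cast_ne_zero.mpr p.1.factorial_ne_zero
          have h2 : ((p.2.factorial : ℂ)) ≠ 0 := Nat.cast_ne_zero.mpr p.2.factorial_ne_zero
          have h3 : ((p.2 : ℂ) + 1) ≠ 0 := Nat.cast_add_one_ne_zero p.2
          push_cast
          field_simp
        rw [Nat.cast_add, Nat.cast_one, hcoef]
        simp only [hT]
        rw [show rise x d (p.2 + 1) = rise x d p.2 * (x + algebraMap ℂ A (d + p.2)) from rfl,
          mul_assoc]
      rw [h1, h2, ← Finset.sum_add_distrib, Finset.smul_sum]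
      refine Finset.sum_congr rfl fun p hp => ?_
      have hpm : p.1 + p.2 = m := Finset.HasAntidiagonal.mem_antidiagonal.mp hp
      have heq : (x + algebraMap ℂ A (a - p.1)) - (x + algebraMap ℂ A (d + p.2))
          = algebraMap ℂ A (a - d - m) := by
        rw [add_sub_add_left_eq_sub, ← map_sub]
        congr 1
        have h : ((p.1 : ℂ) + p.2) = (m : ℂ) := by exact_mod_cast congrArg (Nat.cast (R := ℂ)) hpm
        rw [← h]; ring
      rw [neg_smul, ← sub_eq_add_neg, ← smul_sub, ← mul_sub, heq, ← Algebra.commutes, ← Algebra.smul_def,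
        smul_comm]
    have step : ∑ p ∈ Finset.HasAntidiagonal.antidiagonal (m + 1), c p • T p
        = ((a - d - m) / (m + 1)) • ∑ p ∈ Finset.HasAntidiagonal.antidiagonal m, c p • T p := by
      have := congrArg (fun y => ((m : ℂ) + 1)⁻¹ • y) key
      simpa [smul_smul, inv_mul_cancel₀ hm1, div_eq_inv_mul] using this
    rw [step, ih, smul_smul, gbinom_succ]
end

section
/- Let A be a unital associative ℂ-algebra with elements T, E satisfying [T,E] = E, and let c ∈ ℂ. In A[[t]], define J_c = Σ_{i≥0} ((−1)^i/i!)·T_{−c}^{[i]}·E^i·t^i and 𝕁_c = Σ_{i≥0} (1/i!)·T_c^{[i]}·E^i·t^i. Then 𝕁_c · J_{−c} = 1, i.e., 𝕁_c is invertible in A[[t]] with inverse J_{−c}. -/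
section aux
variable {A : Type*} [Ring A] [Algebra ℂ A]

lemma fall_congr (T : A) {a b : ℂ} (j : ℕ) (hab : a = b) : fall T a j = fall T b j := by
  subst hab; rfl

lemma E_mul_lin (T E : A) (h : T * E - E * T = E) (b : ℂ) :
    E * (T + algebraMap ℂ A b) = (T + algebraMap ℂ A (b - 1)) * E := by
  have hET : E * T = T * E - E := by rw [sub_eq_iff_eq_add.mp h]; abel
  rw [mul_add, hET, map_sub, map_one, add_mul, sub_mul, one_mul, Algebra.commutes]
  abel

lemma E_mul_fall (T E : A) (h : T * E - E * T = E) (a : ℂ) (j : ℕ) :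
    E * fall T a j = fall T (a - 1) j * E := by
  induction j with
  | zero => simp [fall]
  | succ j ih =>
      rw [fall, ← mul_assoc, ih, mul_assoc, E_mul_lin T E h, ← mul_assoc, fall]
      congr 2
      ring_nf

lemma pow_mul_fall (T E : A) (h : T * E - E * T = E) (i : ℕ) (a : ℂ) (j : ℕ) :
    E ^ i * fall T a j = fall T (a - i) j * E ^ i := by
  induction i generalizing a with
  | zero => simp
  | succ i ih =>
      rw [pow_succ, mul_assoc, E_mul_fall T E h, ← mul_assoc, ih, mul_assoc, ← pow_succ,
        fall_congr T j (by push_cast; ring : a - 1 - (i : ℂ) = a - ((i : ℕ) + 1 : ℕ))]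

lemma fall_add (T : A) (a : ℂ) (i j : ℕ) :
    fall T a (i + j) = fall T a i * fall T (a - i) j := by
  induction j with
  | zero => simp [fall]
  | succ j ih =>
      rw [show i + (j+1) = (i+j) + 1 from rfl, fall, ih, fall, mul_assoc]
      rw [show a - ((i : ℕ) + j : ℕ) = (a - i) - j by push_cast; ring]

end aux

lemma scalar_sum (n : ℕ) :
    ∑ p ∈ Finset.HasAntidiagonal.antidiagonal n,
      ((1 : ℂ) / (p.1.factorial : ℂ)) * ((-1 : ℂ) ^ p.2 / (p.2.factorial : ℂ)) =
      if n = 0 then 1 else 0 := by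
  rw [Finset.Nat.sum_antidiagonal_eq_sum_range_succ_mk]
  have key : ((1 : ℂ) + (-1)) ^ n =
      ∑ k ∈ Finset.range (n + 1), (1:ℂ)^k * (-1)^(n-k) * (n.choose k) := add_pow 1 (-1) n
  have h2 : ∑ k ∈ Finset.range (n + 1),
      ((1 : ℂ) / (k.factorial : ℂ)) * ((-1 : ℂ) ^ (n-k) / ((n-k).factorial : ℂ)) =
      (((1 : ℂ) + (-1)) ^ n) / (n.factorial : ℂ) := by
    rw [key, Finset.sum_div]
    refine Finset.sum_congr rfl fun k hk => ?_
    have hkn : k ≤ n := Nat.lt_succ_iff.mp (Finset.mem_range.mp hk)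
    rw [Nat.cast_choose ℂ hkn]
    have h1 : (k.factorial : ℂ) ≠ 0 := Nat.cast_ne_zero.mpr k.factorial_ne_zero
    have h2 : ((n-k).factorial : ℂ) ≠ 0 := Nat.cast_ne_zero.mpr (n-k).factorial_ne_zero
    have h3 : (n.factorial : ℂ) ≠ 0 := Nat.cast_ne_zero.mpr n.factorial_ne_zero
    field_simp
    ring
  rw [h2]
  rcases n with _ | n
  · norm_num
  · simp [zero_pow]

theorem J_inverse {A : Type*} [Ring A] [Algebra ℂ A] (T E : A)
    (h : T * E - E * T = E) (c : ℂ) :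
    (PowerSeries.mk fun i =>
        (((1 : ℂ) / (i.factorial : ℂ)) • (fall T c i * E ^ i) : A)) *
      (PowerSeries.mk fun i =>
        (((-1 : ℂ) ^ i / (i.factorial : ℂ)) • (fall T c i * E ^ i) : A)) = 1 := by
  ext n
  rw [PowerSeries.coeff_mul]
  simp only [PowerSeries.coeff_mk]
  have step : ∀ p ∈ Finset.HasAntidiagonal.antidiagonal n,
      (((1 : ℂ) / (p.1.factorial : ℂ)) • (fall T c p.1 * E ^ p.1)) *
        (((-1 : ℂ) ^ p.2 / (p.2.factorial : ℂ)) • (fall T c p.2 * E ^ p.2)) =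
      (((1 : ℂ) / (p.1.factorial : ℂ)) * ((-1 : ℂ) ^ p.2 / (p.2.factorial : ℂ))) •
        (fall T c n * E ^ n) := by
    rintro ⟨i, j⟩ hp
    have hij : i + j = n := Finset.HasAntidiagonal.mem_antidiagonal.mp hp
    rw [smul_mul_smul_comm]
    congr 1
    rw [mul_assoc, ← mul_assoc (E ^ i), pow_mul_fall T E h, mul_assoc, ← pow_add,
      ← mul_assoc, ← fall_add, hij]
  rw [Finset.sum_congr rfl step, ← Finset.sum_smul, scalar_sum]
  rcases n with _ | n
  · simp [fall, PowerSeries.coeff_one]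
  · simp [PowerSeries.coeff_one]
end

section
/- Let A be a unital associative ℂ-algebra with elements T, E, D satisfying [T,E] = E, [T,D] = 0 and [D,E] = λ·E for some λ ∈ ℂ. Then in A[[t]], with J_c = Σ_{i≥0} ((−1)^i/i!)·T_{−c}^{[i]}·E^i·t^i, one has D·J_c = J_c·D − λ·J_c·T_{−c}·E·t. -/
theorem D_mul_J {A : Type*} [Ring A] [Algebra ℂ A] (T E D : A) (l : ℂ)
    (hTE : T * E - E * T = E) (hTD : T * D - D * T = 0) (hDE : D * E - E * D = l • E)
    (c : ℂ) :
    let J : PowerSeries A := PowerSeries.mk fun i =>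
      ((-1 : ℂ) ^ i / (i.factorial : ℂ)) • (fall T (-c) i * E ^ i)
    (PowerSeries.C (R := A) D) * J =
      J * PowerSeries.C (R := A) D -
        l • (J * PowerSeries.C (R := A) ((T - algebraMap ℂ A c) * E) * PowerSeries.X) := by
  intro J
  have hET : E * T = T * E - E := by rw [sub_eq_iff_eq_add.mp hTE]; abel
  have hTD' : D * T = T * D := (sub_eq_zero.mp hTD).symm
  have hDE' : D * E = E * D + l • E := by rw [sub_eq_iff_eq_add.mp hDE]; abel
  have hDfall : ∀ n, D * fall T (-c) n = fall T (-c) n * D := by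
    intro n
    induction n with
    | zero => simp [fall]
    | succ n ih =>
      show D * (fall T (-c) n * (T + algebraMap ℂ A (-c - n))) = _
      rw [← mul_assoc, ih, mul_assoc, mul_add, hTD', ← Algebra.commutes, ← add_mul,
        ← mul_assoc]
      rfl
  have hDEpow : ∀ n : ℕ, D * E ^ n = E ^ n * D + ((n : ℂ) * l) • E ^ n := by
    intro n
    induction n with
    | zero => simp
    | succ n ih =>
      rw [pow_succ, ← mul_assoc, ih, add_mul, smul_mul_assoc, mul_assoc, hDE',
        mul_add, ← mul_assoc, mul_smul_comm, ← pow_succ]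
      push_cast
      rw [add_mul, one_mul, add_smul]
      abel
  have hEpowT : ∀ n : ℕ, E ^ n * T = (T - algebraMap ℂ A n) * E ^ n := by
    intro n
    induction n with
    | zero => simp
    | succ n ih =>
      rw [pow_succ, mul_assoc, hET, mul_sub, ← mul_assoc, ih, ← pow_succ]
      push_cast
      rw [pow_succ]
      noncomm_ring
  have h1 : ∀ n : ℕ, E ^ n * (T - algebraMap ℂ A c) =
      (T + algebraMap ℂ A (-c - n)) * E ^ n := by
    intro n
    have hc : algebraMap ℂ A c * E ^ n = E ^ n * algebraMap ℂ A c := Algebra.commutes c _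
    have hm : algebraMap ℂ A (-c - n) = -algebraMap ℂ A c - algebraMap ℂ A (n : ℂ) := by
      rw [map_sub, map_neg]
    rw [mul_sub, hEpowT, ← hc, hm]
    noncomm_ring
  have h2 : ∀ n : ℕ, fall T (-c) n * E ^ n * ((T - algebraMap ℂ A c) * E) =
      fall T (-c) (n + 1) * E ^ (n + 1) := by
    intro n
    calc fall T (-c) n * E ^ n * ((T - algebraMap ℂ A c) * E)
        = fall T (-c) n * (E ^ n * (T - algebraMap ℂ A c)) * E := by noncomm_ring
      _ = fall T (-c) n * ((T + algebraMap ℂ A (-c - n)) * E ^ n) * E := by rw [h1]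
      _ = fall T (-c) (n + 1) * E ^ (n + 1) := by
          show _ = fall T (-c) n * (T + algebraMap ℂ A (-c - n)) * E ^ (n + 1)
          rw [pow_succ]; noncomm_ring
  have key : ∀ n : ℕ,
      D * (((-1 : ℂ) ^ (n+1) / ((n+1).factorial : ℂ)) • (fall T (-c) (n+1) * E ^ (n+1)))
        = (((-1 : ℂ) ^ (n+1) / ((n+1).factorial : ℂ)) • (fall T (-c) (n+1) * E ^ (n+1))) * D
          - l • ((((-1 : ℂ) ^ n / (n.factorial : ℂ)) • (fall T (-c) n * E ^ n)) *
              ((T - algebraMap ℂ A c) * E)) := by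
    intro n
    set s1 : ℂ := (-1 : ℂ) ^ (n+1) / ((n+1).factorial : ℂ) with hs1
    set s0 : ℂ := (-1 : ℂ) ^ n / (n.factorial : ℂ) with hs0
    have hfac : ((n.factorial : ℂ)) ≠ 0 := Nat.cast_ne_zero.mpr n.factorial_ne_zero
    have hfac1 : (((n+1).factorial : ℂ)) = ((n : ℂ) + 1) * (n.factorial : ℂ) := by
      push_cast [Nat.factorial_succ]; ring
    have hs : s1 * (((n : ℂ) + 1) * l) = -(l * s0) := by
      rw [hs1, hs0, hfac1, pow_succ]
      have hn1 : ((n : ℂ) + 1) ≠ 0 := Nat.cast_add_one_ne_zero n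
      field_simp
    set F := fall T (-c) (n+1) with hF
    calc D * (s1 • (F * E ^ (n+1)))
        = s1 • (F * (D * E ^ (n+1))) := by
          rw [mul_smul_comm, ← mul_assoc, hDfall, mul_assoc]
      _ = s1 • (F * E ^ (n+1) * D) + (s1 * (((n : ℂ) + 1) * l)) • (F * E ^ (n+1)) := by
          rw [hDEpow]
          push_cast
          rw [mul_add, ← mul_assoc, mul_smul_comm, smul_add, smul_smul]
      _ = (s1 • (F * E ^ (n+1))) * D
          - l • ((s0 • (fall T (-c) n * E ^ n)) * ((T - algebraMap ℂ A c) * E)) := by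
          rw [hs, smul_mul_assoc, smul_mul_assoc, h2, smul_smul, sub_eq_add_neg, ← neg_smul]
  ext n
  rcases n with _ | n
  · simp only [map_sub, PowerSeries.coeff_C_mul, PowerSeries.coeff_mul_C,
      PowerSeries.coeff_smul, PowerSeries.coeff_zero_mul_X, PowerSeries.coeff_mk, J]
    simp [fall]
  · simp only [map_sub, PowerSeries.coeff_C_mul, PowerSeries.coeff_mul_C,
      PowerSeries.coeff_succ_mul_X, PowerSeries.coeff_mk, PowerSeries.coeff_smul, J]
    exact key n
end
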